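/- Let Λ = ℤℓ[[γ−1]], ω_n = γ^{ℓⁿ} − 1, and let T be a finitely generated torsion Λ-module whose characteristic power series is coprime to all ω_n, with maximal finite submodule F. If the natural map T/ωT → lim→ T/ω_nT (direct limit over the transition maps given by multiplication by ω_n/ω) is the zero map, then T = F; in particular T is finite. -/

import Mathlib

/-- If a submodule and the corresponding quotient are finite, the module is finite. -/
lemma finite_of_submodule_quotient {R M : Type*} [Ring R] [AddCommGroup M] [Module R M]
    (S : Submodule R M) (h1 : Finite S) (h2 : Finite (M ⧸ S)) : Finite M := by
  have hsurj := S.mkQ_surjective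
  set σ := Function.surjInv hsurj with hσ
  have hsec : ∀ q, S.mkQ (σ q) = q := fun q => Function.surjInv_eq hsurj q
  have hmem : ∀ x : M, x - σ (S.mkQ x) ∈ S := by
    intro x
    rw [← Submodule.Quotient.mk_eq_zero]
    show S.mkQ _ = 0
    rw [map_sub, hsec, sub_self]
  have hinj : Function.Injective
      (fun x : M => ((S.mkQ x, ⟨x - σ (S.mkQ x), hmem x⟩) : (M ⧸ S) × S)) := by
    intro a b hab
    obtain ⟨h1', h2'⟩ := Prod.mk.injEq .. ▸ hab
    have := congrArg Subtype.val h2'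
    simp only at this
    rw [h1'] at this
    exact sub_left_injective this
  haveI := h1; haveI := h2
  exact Finite.of_injective _ hinj



/-- `χ` is a characteristic power series of the finitely generated torsion
`Λ = ℤ_[p][[T]]`-module `M`: by the structure theorem, `M` is pseudo-isomorphic
(i.e. admits a map with finite kernel and cokernel) to an elementary module
`⊕ᵢ Λ/(Pᵢ)` with the `Pᵢ` nonzero, and `χ = ∏ᵢ Pᵢ`. -/
def IsCharSeries (p : ℕ) [Fact p.Prime] (M : Type*) [AddCommGroup M]
    [Module (PowerSeries ℤ_[p]) M] (χ : PowerSeries ℤ_[p]) : Prop :=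
  ∃ (n : ℕ) (P : Fin n → PowerSeries ℤ_[p]),
    (∀ i, P i ≠ 0) ∧ χ = ∏ i, P i ∧
    ∃ f : M →ₗ[PowerSeries ℤ_[p]] (∀ i, PowerSeries ℤ_[p] ⧸ Ideal.span {P i}),
      Finite (LinearMap.ker f) ∧
      Finite ((∀ i, PowerSeries ℤ_[p] ⧸ Ideal.span {P i}) ⧸ LinearMap.range f)
/-- `ω_n = γ^{pⁿ} − 1` in the Iwasawa algebra `Λ = ℤ_[p][[γ−1]] = ℤ_[p][[T]]`,
where `γ = 1 + T`. -/
noncomputable def Om (p : ℕ) [Fact p.Prime] (n : ℕ) : PowerSeries ℤ_[p] :=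
  (1 + PowerSeries.X) ^ (p ^ n) - 1

/-- the quotient `ω_m/ω_n = Σ_{k < p^{m−n}} (γ^{pⁿ})^k` (for `m ≥ n`),
a distinguished polynomial in `Λ`. -/
noncomputable def Nu (p : ℕ) [Fact p.Prime] (n m : ℕ) : PowerSeries ℤ_[p] :=
  ∑ k ∈ Finset.range (p ^ (m - n)), ((1 + PowerSeries.X) ^ (p ^ n)) ^ k

/-- with `M` a finitely generated torsion `Λ`-module whose characteristic
power series is coprime to all `ω_n`, and `F` its maximal finite submodule: if the
natural map `M/ωM → lim→ M/ω_nM` is zero (i.e. every `x : M` is sent to `0` in some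
`M/ω_mM` by multiplication by `ω_m/ω`), then `M = F`; in particular `M` is finite. -/
theorem stmt8 (p : ℕ) [Fact p.Prime]
    (M : Type*) [AddCommGroup M] [Module (PowerSeries ℤ_[p]) M]
    [Module.Finite (PowerSeries ℤ_[p]) M]
    (htors : Module.IsTorsion (PowerSeries ℤ_[p]) M)
    (χ : PowerSeries ℤ_[p]) (hχ : IsCharSeries p M χ)
    (hcop : ∀ n, Finite (PowerSeries ℤ_[p] ⧸ Ideal.span {χ, Om p n}))
    (F : Submodule (PowerSeries ℤ_[p]) M) (hFfin : Finite F)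
    (hFmax : ∀ F' : Submodule (PowerSeries ℤ_[p]) M, Finite F' → F' ≤ F)
    (hzero : ∀ x : M, ∃ m : ℕ,
      (Nu p 0 m) • x ∈ LinearMap.range (LinearMap.lsmul (PowerSeries ℤ_[p]) M (Om p m))) :
    F = ⊤ ∧ Finite M := by
  classical
  obtain ⟨n, P, hP, hchi, f, hker, hcoker⟩ := hχ
  -- χ sends everything into the (finite) kernel of f
  have hchiK : ∀ x : M, χ • x ∈ LinearMap.ker f := by
    intro x
    rw [LinearMap.mem_ker, map_smul]
    ext i
    have hmem : χ ∈ Ideal.span {P i} :=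
      Ideal.mem_span_singleton.2 (hchi ▸ Finset.dvd_prod_of_mem P (Finset.mem_univ i))
    obtain ⟨g, hg⟩ := Submodule.Quotient.mk_surjective _ (f x i)
    rw [Pi.smul_apply, Pi.zero_apply, ← hg, ← Submodule.Quotient.mk_smul,
      Submodule.Quotient.mk_eq_zero]
    rw [smul_eq_mul]
    exact Ideal.mul_mem_right _ _ hmem
  -- key: anything killed by some ω_m lies in F
  have key : ∀ (m : ℕ) (z : M), Om p m • z = 0 → z ∈ F := by
    intro m z hz
    set I : Ideal (PowerSeries ℤ_[p]) := Ideal.span {χ, Om p m} with hI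
    set S : Submodule (PowerSeries ℤ_[p]) M := Submodule.span _ {z} with hS
    have hIS : I • S ≤ LinearMap.ker f := by
      refine Submodule.smul_le.2 fun a ha s hs => ?_
      obtain ⟨c, d, hcd⟩ := Ideal.mem_span_pair.1 ha
      obtain ⟨e, rfl⟩ := Submodule.mem_span_singleton.1 hs
      have heq : a • e • z = (c * e) • (χ • z) + (d * e) • (Om p m • z) := by
        rw [smul_smul, smul_smul, smul_smul, ← add_smul, ← hcd]
        congr 1
        ring
      rw [heq, hz, smul_zero, add_zero]
      exact Submodule.smul_mem _ _ (hchiK z)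
    haveI : Finite (LinearMap.ker f) := hker
    have hfin1 : Finite (I • (⊤ : Submodule (PowerSeries ℤ_[p]) ↥S) : Submodule (PowerSeries ℤ_[p]) ↥S) := by
      have hmap : Submodule.map S.subtype (I • (⊤ : Submodule (PowerSeries ℤ_[p]) ↥S)) = I • S := by
        rw [Submodule.map_smul'', Submodule.map_top, Submodule.range_subtype]
      have hle : Submodule.map S.subtype (I • (⊤ : Submodule (PowerSeries ℤ_[p]) ↥S)) ≤ LinearMap.ker f :=
        hmap ▸ hIS
      haveI : Finite (Submodule.map S.subtype (I • (⊤ : Submodule (PowerSeries ℤ_[p]) ↥S))) :=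
        Finite.of_injective (Submodule.inclusion hle) (Submodule.inclusion_injective hle)
      exact Finite.of_equiv _
        (Submodule.equivMapOfInjective S.subtype S.injective_subtype
          (I • (⊤ : Submodule (PowerSeries ℤ_[p]) ↥S))).toEquiv.symm
    have hfin2 : Finite (S ⧸ (I • (⊤ : Submodule (PowerSeries ℤ_[p]) ↥S))) := by
      have ht := Module.isTorsionBySet_quotient_ideal_smul (R := PowerSeries ℤ_[p]) S I
      letI := ht.module
      letI := ht.isScalarTower (S := PowerSeries ℤ_[p])
      haveI : Module.Finite (PowerSeries ℤ_[p]) S :=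
        Module.Finite.span_of_finite _ (Set.finite_singleton z)
      haveI : Module.Finite (PowerSeries ℤ_[p]) (S ⧸ (I • (⊤ : Submodule (PowerSeries ℤ_[p]) ↥S))) :=
        inferInstance
      haveI : Module.Finite (PowerSeries ℤ_[p] ⧸ I) (S ⧸ (I • (⊤ : Submodule (PowerSeries ℤ_[p]) ↥S))) :=
        Module.Finite.of_restrictScalars_finite (PowerSeries ℤ_[p]) _ _
      haveI : Finite (PowerSeries ℤ_[p] ⧸ I) := hcop m
      exact Module.finite_of_finite (PowerSeries ℤ_[p] ⧸ I)
    exact hFmax S (finite_of_submodule_quotient _ hfin1 hfin2)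
      (Submodule.mem_span_singleton_self z)
  -- ω_m = ν_{0,m} · X
  have homX : ∀ m : ℕ, Om p m = Nu p 0 m * PowerSeries.X := by
    intro m
    have h := geom_sum_mul (1 + PowerSeries.X : PowerSeries ℤ_[p]) (p ^ m)
    rw [Om, Nu]
    simp only [Nat.sub_zero, pow_zero, pow_one]
    rw [← h, add_sub_cancel_left]
  -- every x lies in F + X·M
  have hFsup : ∀ x : M, x ∈ F ⊔
      (Ideal.span {(PowerSeries.X : PowerSeries ℤ_[p])}) • (⊤ : Submodule (PowerSeries ℤ_[p]) M) := by
    intro x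
    obtain ⟨m, y, hy⟩ := hzero x
    rw [LinearMap.lsmul_apply] at hy
    have hz : Om p m • (x - (PowerSeries.X : PowerSeries ℤ_[p]) • y) = 0 := by
      rw [smul_sub, smul_smul, mul_comm, mul_smul, hy, smul_smul, mul_comm, ← homX m,
        sub_self]
    have hzF := key m _ hz
    have hXy : (PowerSeries.X : PowerSeries ℤ_[p]) • y ∈
        (Ideal.span {(PowerSeries.X : PowerSeries ℤ_[p])}) • (⊤ : Submodule (PowerSeries ℤ_[p]) M) :=
      Submodule.smul_mem_smul (Ideal.subset_span rfl) Submodule.mem_top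
    have h := Submodule.add_mem_sup hzF hXy
    simpa using h
  have hFtop : F = ⊤ := by
    have hle : (⊤ : Submodule (PowerSeries ℤ_[p]) (M ⧸ F)) ≤
        (Ideal.span {(PowerSeries.X : PowerSeries ℤ_[p])}) • ⊤ := by
      intro q _
      obtain ⟨x, rfl⟩ := F.mkQ_surjective q
      have h2 := Submodule.mem_map_of_mem (f := F.mkQ) (hFsup x)
      rw [Submodule.map_sup, Submodule.map_smul'', Submodule.map_top,
        Submodule.range_mkQ] at h2
      have hFbot : Submodule.map F.mkQ F = ⊥ := by
        rw [eq_bot_iff]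
        rintro u ⟨v, hv, rfl⟩
        simpa [Submodule.mkQ_apply, Submodule.Quotient.mk_eq_zero] using hv
      rw [hFbot, bot_sup_eq] at h2
      exact h2
    have hfg : (⊤ : Submodule (PowerSeries ℤ_[p]) (M ⧸ F)).FG := Module.Finite.fg_top
    have hjac : (Ideal.span {(PowerSeries.X : PowerSeries ℤ_[p])}) ≤
        (⊥ : Ideal (PowerSeries ℤ_[p])).jacobson := by
      rw [IsLocalRing.jacobson_eq_maximalIdeal ⊥ bot_ne_top, Ideal.span_le,
        Set.singleton_subset_iff]
      refine (IsLocalRing.mem_maximalIdeal _).2 fun h => ?_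
      have h0 := h.map PowerSeries.constantCoeff
      rw [PowerSeries.constantCoeff_X] at h0
      exact not_isUnit_zero h0
    have hbot := Submodule.eq_bot_of_le_smul_of_le_jacobson_bot _ ⊤ hfg hle hjac
    rw [Submodule.eq_top_iff']
    intro x
    rw [← Submodule.Quotient.mk_eq_zero]
    have hmem : (Submodule.Quotient.mk x : M ⧸ F) ∈ (⊤ : Submodule (PowerSeries ℤ_[p]) (M ⧸ F)) :=
      Submodule.mem_top
    rw [hbot] at hmem
    simpa using hmem
  refine ⟨hFtop, ?_⟩
  have e : F ≃ₗ[PowerSeries ℤ_[p]] M := by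
    rw [hFtop]; exact Submodule.topEquiv
  exact Finite.of_equiv F e.toEquiv
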